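/- Let T ∈ G(n,n-2) be an (n-2)-dimensional linear subspace of ℝⁿ, let L ∈ G(n,2) be a 2-plane with ‖P_L - P_{T^⊥}‖ ≤ 1/4 (operator norm of the difference of orthogonal projections), and let h ∈ ℝⁿ with |h| ≤ 1/8. Then the affine plane L + h intersects T in exactly one point z, and |z| ≤ 1/6. -/

import Mathlib

open Set Metric

/-- If T is an (n-2)-plane, L a 2-plane with ‖P_L - P_{T^⊥}‖ ≤ 1/4 in operator norm,
and |h| ≤ 1/8, then the affine plane L + h meets T in exactly one point z, which
satisfies |z| ≤ 1/6. -/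
theorem stmt_16 (n : ℕ) (hn : 2 ≤ n)
    (T L : Submodule ℝ (EuclideanSpace ℝ (Fin n)))
    (hT : Module.finrank ℝ T = n - 2) (hL : Module.finrank ℝ L = 2)
    (hdist : ‖(L.subtypeL.comp (L.orthogonalProjectionOnto))
      - (Tᗮ.subtypeL.comp (Tᗮ.orthogonalProjectionOnto))‖ ≤ 1 / 4)
    (h : EuclideanSpace ℝ (Fin n)) (hh : ‖h‖ ≤ 1 / 8) :
    ∃ z : EuclideanSpace ℝ (Fin n),
      (z ∈ T ∧ z - h ∈ L) ∧ ‖z‖ ≤ 1 / 6 ∧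
        ∀ w : EuclideanSpace ℝ (Fin n), w ∈ T ∧ w - h ∈ L → w = z := by
  set P : EuclideanSpace ℝ (Fin n) →L[ℝ] EuclideanSpace ℝ (Fin n) :=
    L.subtypeL.comp (L.orthogonalProjectionOnto) with hPdef
  set Q : EuclideanSpace ℝ (Fin n) →L[ℝ] EuclideanSpace ℝ (Fin n) :=
    Tᗮ.subtypeL.comp (Tᗮ.orthogonalProjectionOnto) with hQdef
  have hPapp : ∀ v, P v = ↑(L.orthogonalProjectionOnto v) := fun v => rfl
  have hQapp : ∀ v, Q v = ↑(Tᗮ.orthogonalProjectionOnto v) := fun v => rfl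
  have hQP : ‖Q - P‖ ≤ 1 / 4 := by rw [norm_sub_rev]; exact hdist
  -- key: Tᗮ ∩ Lᗮ = 0
  have key : ∀ v : EuclideanSpace ℝ (Fin n), v ∈ Tᗮ → v ∈ Lᗮ → v = 0 := by
    intro v hvT hvL
    have h1 : Q v = v := by
      rw [hQapp, ← Submodule.starProjection_apply, Submodule.starProjection_eq_self_iff.2 hvT]
    have h2 : P v = 0 := by
      rw [hPapp, (Submodule.orthogonalProjectionOnto_eq_zero_iff (K := L)).2 hvL]; simp
    have h3 : ‖v‖ ≤ (1 / 4) * ‖v‖ := by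
      calc ‖v‖ = ‖(Q - P) v‖ := by
              simp [ContinuousLinearMap.sub_apply, h1, h2]
        _ ≤ ‖Q - P‖ * ‖v‖ := (Q - P).le_opNorm v
        _ ≤ (1 / 4) * ‖v‖ := mul_le_mul_of_nonneg_right hQP (norm_nonneg v)
    have : ‖v‖ ≤ 0 := by linarith
    exact norm_le_zero_iff.1 this
  -- the unit 1 - (P - Q)
  have hnorm : ‖P - Q‖ < 1 := lt_of_le_of_lt hdist (by norm_num)
  set u : (EuclideanSpace ℝ (Fin n) →L[ℝ] EuclideanSpace ℝ (Fin n))ˣ :=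
    Units.oneSub (P - Q) hnorm with hu
  have huval : (u : EuclideanSpace ℝ (Fin n) →L[ℝ] EuclideanSpace ℝ (Fin n))
      = 1 - (P - Q) := rfl
  have happ : ∀ z, (1 - (P - Q)) z = z - (P z - Q z) := fun z => rfl
  -- characterization
  have hiff : ∀ z, (z ∈ T ∧ z - h ∈ L) ↔ (1 - (P - Q)) z = h - P h := by
    intro z
    rw [happ]
    constructor
    · rintro ⟨hzT, hzL⟩
      have hQz : Q z = 0 := by
        rw [hQapp, (Submodule.orthogonalProjectionOnto_eq_zero_iff (K := Tᗮ)).2 (T.le_orthogonal_orthogonal hzT)]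
        simp
      have hPz : P (z - h) = z - h := by
        rw [hPapp, ← Submodule.starProjection_apply, Submodule.starProjection_eq_self_iff.2 hzL]
      have h4 : P z - P h = z - h := by rw [← map_sub]; exact hPz
      rw [hQz]
      linear_combination (norm := module) -h4
    · intro hz
      have hQmem : Q z ∈ Tᗮ := (Tᗮ.orthogonalProjectionOnto z).2
      have heq : Q z = (h - z) - P (h - z) := by
        rw [map_sub]
        linear_combination (norm := module) hz
      have hLmem : Q z ∈ Lᗮ := by
        rw [heq, hPapp]
        exact Submodule.sub_starProjection_mem_orthogonal (K := L) (h - z)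
      have hQz : Q z = 0 := key _ hQmem hLmem
      have hzT : z ∈ T := by
        have hm : z ∈ Tᗮᗮ := by
          rw [← Submodule.orthogonalProjectionOnto_eq_zero_iff (K := Tᗮ)]
          have h5 := hQz
          rw [hQapp] at h5
          exact Submodule.coe_eq_zero.mp h5
        rwa [Submodule.orthogonal_orthogonal] at hm
      have hzL : z - h ∈ L := by
        have hPzh : P (z - h) = z - h := by
          rw [map_sub]
          linear_combination (norm := module) hQz - hz
        rw [← hPzh, hPapp]
        exact (L.orthogonalProjectionOnto (z - h)).2
      exact ⟨hzT, hzL⟩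
  have hfz : ∀ x, (1 - (P - Q))
      ((↑u⁻¹ : EuclideanSpace ℝ (Fin n) →L[ℝ] EuclideanSpace ℝ (Fin n)) x) = x := by
    intro x
    rw [← huval, ← ContinuousLinearMap.mul_apply, Units.mul_inv, ContinuousLinearMap.one_apply]
  have hinv : ∀ x, (↑u⁻¹ : EuclideanSpace ℝ (Fin n) →L[ℝ] EuclideanSpace ℝ (Fin n))
      ((1 - (P - Q)) x) = x := by
    intro x
    rw [← huval, ← ContinuousLinearMap.mul_apply, Units.inv_mul, ContinuousLinearMap.one_apply]
  have hinj : Function.Injective ⇑(1 - (P - Q) :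
      EuclideanSpace ℝ (Fin n) →L[ℝ] EuclideanSpace ℝ (Fin n)) := by
    intro a b hab
    rw [← hinv a, hab, hinv b]
  set z : EuclideanSpace ℝ (Fin n) :=
    (↑u⁻¹ : EuclideanSpace ℝ (Fin n) →L[ℝ] EuclideanSpace ℝ (Fin n)) (h - P h) with hzdef
  have hz : (1 - (P - Q)) z = h - P h := hfz (h - P h)
  refine ⟨z, (hiff z).2 hz, ?_, ?_⟩
  · have hzeq : z = (h - P h) + ((P - Q) z) := by
      rw [happ] at hz
      have hw : (P - Q) z = P z - Q z := rfl
      rw [hw]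
      linear_combination (norm := module) hz
    have hPh : ‖h - P h‖ ≤ ‖h‖ := by
      have h7 : h - P h = ↑(Lᗮ.orthogonalProjectionOnto h) := by
        rw [hPapp]; exact (Submodule.starProjection_orthogonal_val (K := L) h).symm
      rw [h7]
      calc ‖(Lᗮ.orthogonalProjectionOnto h : EuclideanSpace ℝ (Fin n))‖
          = ‖Lᗮ.orthogonalProjectionOnto h‖ := rfl
        _ ≤ ‖Lᗮ.orthogonalProjectionOnto‖ * ‖h‖ := (Lᗮ.orthogonalProjectionOnto).le_opNorm h
        _ ≤ 1 * ‖h‖ :=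
            mul_le_mul_of_nonneg_right (Submodule.orthogonalProjectionOnto_norm_le (K := Lᗮ)) (norm_nonneg h)
        _ = ‖h‖ := one_mul _
    have hPQz : ‖(P - Q) z‖ ≤ (1 / 4) * ‖z‖ :=
      le_trans ((P - Q).le_opNorm z) (mul_le_mul_of_nonneg_right hdist (norm_nonneg z))
    have h8 : ‖z‖ ≤ ‖h - P h‖ + ‖(P - Q) z‖ := by
      calc ‖z‖ = ‖(h - P h) + ((P - Q) z)‖ := by rw [← hzeq]
        _ ≤ ‖h - P h‖ + ‖(P - Q) z‖ := norm_add_le _ _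
    linarith
  · intro w hw
    exact hinj (((hiff w).1 hw).trans hz.symm)
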